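/- For poset ideals I ⊆ I' of a finite poset P, the segment conv({ρ(I), ρ(I')}) is an edge of the order polytope O(P) if and only if the set difference I' \ I is connected as an induced subposet (i.e., connected in the Hasse diagram of P). -/

import Mathlib

open Set

variable {α : Type*} [Fintype α] [PartialOrder α]

/-- A poset ideal (down-set) of a poset. -/
def IsPosetIdeal (I : Set α) : Prop := ∀ ⦃a b : α⦄, a ≤ b → b ∈ I → a ∈ I

/-- The indicator vector of a subset. -/
noncomputable def rho (I : Set α) : α → ℝ := I.indicator 1

/-- The order polytope of a finite poset. -/
noncomputable def orderPolytope (α : Type*) [Fintype α] [PartialOrder α] : Set (α → ℝ) :=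
  convexHull ℝ {x | ∃ I : Set α, IsPosetIdeal I ∧ x = rho I}

/-- A subset of a poset is connected if the induced subgraph of the Hasse diagram is connected. -/
def ConnectedIn (S : Set α) : Prop := ((SimpleGraph.hasse α).induce S).Connected

/-- `conv {v, w}` is an edge (1-dimensional face) of the polytope `P`. -/
def IsEdgeOf (P : Set (α → ℝ)) (v w : α → ℝ) : Prop :=
  v ≠ w ∧ IsExtreme ℝ P (segment ℝ v w)

set_option linter.unusedSectionVars false

open scoped Classical in
lemma rho_apply (I : Set α) (p : α) : rho I p = if p ∈ I then 1 else 0 := by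
  simp [rho, Set.indicator_apply]


-- every point of the polytope is in [0,1] coordinatewise and is antitone
lemma polytope_props {u : α → ℝ} (hu : u ∈ orderPolytope α) :
    (∀ p, 0 ≤ u p ∧ u p ≤ 1) ∧ ∀ p q : α, p ≤ q → u q ≤ u p := by
  have h : orderPolytope α ⊆
      {u : α → ℝ | (∀ p, 0 ≤ u p ∧ u p ≤ 1) ∧ ∀ p q : α, p ≤ q → u q ≤ u p} := by
    apply convexHull_min
    · rintro x ⟨J, hJ, rfl⟩
      refine ⟨fun p => ?_, fun p q hpq => ?_⟩
      · rw [rho_apply]; split <;> norm_num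
      · rw [rho_apply, rho_apply]
        by_cases hq : q ∈ J
        · simp [hq, hJ hpq hq]
        · simp only [hq, if_false]; split <;> norm_num
    · rintro x hx y hy a b ha hb hab
      refine ⟨fun p => ?_, fun p q hpq => ?_⟩
      · have h1 := (hx.1 p).1; have h2 := (hx.1 p).2
        have h3 := (hy.1 p).1; have h4 := (hy.1 p).2
        constructor
        · simp only [Pi.add_apply, Pi.smul_apply, smul_eq_mul]
          nlinarith
        · simp only [Pi.add_apply, Pi.smul_apply, smul_eq_mul]
          nlinarith
      · have h1 := hx.2 p q hpq; have h2 := hy.2 p q hpq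
        simp only [Pi.add_apply, Pi.smul_apply, smul_eq_mul]
        nlinarith
  exact h hu

set_option linter.unusedSectionVars false

-- In a finite poset, b < a gives a cover b ⋖ c with c ≤ a.
lemma exists_cov_le {b a : α} (h : b < a) : ∃ c, b ⋖ c ∧ c ≤ a := by
  obtain ⟨c, ⟨hbc, hca⟩, hmin⟩ :=
    (Finite.to_wellFoundedLT (α := α)).wf.has_min {c | b < c ∧ c ≤ a} ⟨a, h, le_rfl⟩
  exact ⟨c, ⟨hbc, fun d hbd hdc => hmin d ⟨hbd, hdc.le.trans hca⟩ hdc⟩, hca⟩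

-- elements of I' \ I comparable are reachable in the induced Hasse graph
lemma reach_of_le {I I' : Set α} (hI : IsPosetIdeal I) (hI' : IsPosetIdeal I')
    (b : α) (hb : b ∈ I' \ I) (a : α) (ha : a ∈ I' \ I) (hba : b ≤ a) :
    ((SimpleGraph.hasse α).induce (I' \ I)).Reachable ⟨b, hb⟩ ⟨a, ha⟩ := by
  induction b using ((Finite.to_wellFoundedGT (α := α)).wf).induction with
  | _ b ih =>
    rcases eq_or_lt_of_le hba with rfl | hlt
    · rfl
    · obtain ⟨c, hcov, hca⟩ := exists_cov_le hlt
      have hc : c ∈ I' \ I := ⟨hI' hca ha.1, fun hcI => hb.2 (hI hcov.le hcI)⟩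
      have hadj : ((SimpleGraph.hasse α).induce (I' \ I)).Adj ⟨b, hb⟩ ⟨c, hc⟩ :=
        Or.inl hcov
      exact hadj.reachable.trans (ih c hcov.lt hc hca)

lemma extreme_of_connected {I I' : Set α} (hI : IsPosetIdeal I) (hI' : IsPosetIdeal I')
    (hsub : I ⊆ I') (hc : ((SimpleGraph.hasse α).induce (I' \ I)).Connected) :
    IsExtreme ℝ (orderPolytope α) (segment ℝ (rho I) (rho I')) := by
  have hvI : rho I ∈ orderPolytope α := subset_convexHull ℝ _ ⟨I, hI, rfl⟩
  have hvI' : rho I' ∈ orderPolytope α := subset_convexHull ℝ _ ⟨I', hI', rfl⟩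
  constructor
  · exact (convex_convexHull ℝ _).segment_subset hvI hvI'
  · -- main part
    -- auxiliary claim: one endpoint of the open segment is in the segment
    suffices key : ∀ x y : α → ℝ, x ∈ orderPolytope α → y ∈ orderPolytope α →
        ∀ a b : ℝ, 0 < a → 0 < b → a + b = 1 →
        ∀ t : ℝ, t ∈ Icc (0:ℝ) 1 →
        (∀ p, a * x p + b * y p = (1 - t) * rho I p + t * rho I' p) →
        x ∈ segment ℝ (rho I) (rho I') by
      rintro x hx y hy z hz ⟨a, b, ha, hb, hab, hzeq⟩
      rw [segment_eq_image] at hz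
      obtain ⟨t, ht, hteq⟩ := hz
      have heq : ∀ p, a * x p + b * y p = (1 - t) * rho I p + t * rho I' p := by
        intro p
        have h1 := congrFun hzeq p
        have h2 := congrFun hteq p
        simp only [Pi.add_apply, Pi.smul_apply, smul_eq_mul] at h1 h2
        rw [h1, ← h2]
      have heq' : ∀ p, b * y p + a * x p = (1 - t) * rho I p + t * rho I' p := by
        intro p; rw [add_comm]; exact heq p
      exact key x y hx hy a b ha hb hab t ht heq
    intro x y hx hy a b ha hb hab t ht heq
    obtain ⟨hxb, hxm⟩ := polytope_props hx
    obtain ⟨hyb, hym⟩ := polytope_props hy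
    -- x is 1 on I
    have hone : ∀ p ∈ I, x p = 1 := by
      intro p hp
      have h := heq p
      rw [rho_apply, rho_apply, if_pos hp, if_pos (hsub hp)] at h
      have hx2 := (hxb p).2; have hy2 := (hyb p).2
      nlinarith [mul_nonneg hb.le (sub_nonneg.2 hy2), mul_nonneg ha.le (sub_nonneg.2 hx2)]
    -- x is 0 outside I'
    have hzero : ∀ p, p ∉ I' → x p = 0 := by
      intro p hp
      have h := heq p
      have hpI : p ∉ I := fun h' => hp (hsub h')
      rw [rho_apply, rho_apply, if_neg hp, if_neg hpI] at h
      have hx1 := (hxb p).1; have hy1 := (hyb p).1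
      nlinarith [mul_nonneg hb.le hy1, mul_nonneg ha.le hx1]
    -- x is constant on I' \ I
    have hS : ∀ p ∈ I' \ I, a * x p + b * y p = t := by
      intro p hp
      have h := heq p
      rw [rho_apply, rho_apply, if_neg hp.2, if_pos hp.1] at h
      linarith [h]
    have hadjc : ∀ u v : ↥(I' \ I),
        ((SimpleGraph.hasse α).induce (I' \ I)).Adj u v → x u.1 = x v.1 := by
      intro u v hadj
      have h1 := hS u.1 u.2
      have h2 := hS v.1 v.2
      rcases hadj with hcov | hcov
      · have hx' := hxm u.1 v.1 hcov.le
        have hy' := hym u.1 v.1 hcov.le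
        nlinarith [mul_nonneg ha.le (sub_nonneg.2 hx'), mul_nonneg hb.le (sub_nonneg.2 hy')]
      · have hx' := hxm v.1 u.1 hcov.le
        have hy' := hym v.1 u.1 hcov.le
        nlinarith [mul_nonneg ha.le (sub_nonneg.2 hx'), mul_nonneg hb.le (sub_nonneg.2 hy')]
    have hreachc : ∀ u v : ↥(I' \ I),
        ((SimpleGraph.hasse α).induce (I' \ I)).Reachable u v → x u.1 = x v.1 := by
      intro u v hr
      obtain ⟨w⟩ := hr
      induction w with
      | nil => rfl
      | cons h w ih => exact (hadjc _ _ h).trans ih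
    obtain ⟨p0⟩ := hc.nonempty
    set s := x p0.1 with hs
    have hconst : ∀ p (hp : p ∈ I' \ I), x p = s :=
      fun p hp => (hreachc p0 ⟨p, hp⟩ (hc.preconnected p0 ⟨p, hp⟩)).symm
    have hs0 : 0 ≤ s := (hxb p0.1).1
    have hs1 : s ≤ 1 := (hxb p0.1).2
    rw [segment_eq_image]
    refine ⟨s, ⟨hs0, hs1⟩, ?_⟩
    funext p
    simp only [Pi.add_apply, Pi.smul_apply, smul_eq_mul]
    by_cases hpI : p ∈ I
    · rw [rho_apply, rho_apply, if_pos hpI, if_pos (hsub hpI), hone p hpI]; ring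
    · by_cases hpI' : p ∈ I'
      · rw [rho_apply, rho_apply, if_neg hpI, if_pos hpI', hconst p ⟨hpI', hpI⟩]; ring
      · rw [rho_apply, rho_apply, if_neg hpI, if_neg hpI', hzero p hpI']; ring

lemma disconnected_aux {I I' : Set α} (hI : IsPosetIdeal I) (hI' : IsPosetIdeal I')
    (hsub : I ⊆ I')
    (hext : IsExtreme ℝ (orderPolytope α) (segment ℝ (rho I) (rho I')))
    (u v : ↥(I' \ I))
    (huv : ¬ ((SimpleGraph.hasse α).induce (I' \ I)).Reachable u v) : False := by
  classical
  let A : Set α := {q | ∃ h : q ∈ I' \ I, ((SimpleGraph.hasse α).induce (I' \ I)).Reachable u ⟨q, h⟩}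
  let B : Set α := (I' \ I) \ A
  have hASub : A ⊆ I' \ I := fun q hq => hq.1
  have huA : u.1 ∈ A := ⟨u.2, by rw [Subtype.coe_eta]⟩
  have hvB : v.1 ∈ B := by
    refine ⟨v.2, fun h => ?_⟩
    obtain ⟨hv, hr⟩ := h
    exact huv (by rwa [Subtype.coe_eta] at hr)
  -- I ∪ A and I ∪ B are ideals
  have hIA : IsPosetIdeal (I ∪ A) := by
    intro c d hcd hd
    rcases hd with hd | hd
    · exact Or.inl (hI hcd hd)
    · by_cases hcI : c ∈ I
      · exact Or.inl hcI
      · have hcS : c ∈ I' \ I := ⟨hI' hcd (hASub hd).1, hcI⟩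
        obtain ⟨hdS, hr⟩ := hd
        exact Or.inr ⟨hcS, hr.trans (reach_of_le hI hI' c hcS d hdS hcd).symm⟩
  have hIB : IsPosetIdeal (I ∪ B) := by
    intro c d hcd hd
    rcases hd with hd | hd
    · exact Or.inl (hI hcd hd)
    · by_cases hcI : c ∈ I
      · exact Or.inl hcI
      · have hcS : c ∈ I' \ I := ⟨hI' hcd hd.1.1, hcI⟩
        refine Or.inr ⟨hcS, fun hcA => ?_⟩
        obtain ⟨_, hr⟩ := hcA
        exact hd.2 ⟨hd.1, hr.trans (reach_of_le hI hI' c hcS d hd.1 hcd)⟩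
  -- midpoint argument
  have hA_mem : rho (I ∪ A) ∈ orderPolytope α := subset_convexHull ℝ _ ⟨I ∪ A, hIA, rfl⟩
  have hB_mem : rho (I ∪ B) ∈ orderPolytope α := subset_convexHull ℝ _ ⟨I ∪ B, hIB, rfl⟩
  have hmidsum : ∀ p, rho (I ∪ A) p + rho (I ∪ B) p = rho I p + rho I' p := by
    intro p
    rw [rho_apply, rho_apply, rho_apply, rho_apply]
    by_cases hpI : p ∈ I
    · rw [if_pos (Set.mem_union_left A hpI), if_pos (Set.mem_union_left B hpI),
        if_pos hpI, if_pos (hsub hpI)]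
    · by_cases hpI' : p ∈ I'
      · have hpS : p ∈ I' \ I := ⟨hpI', hpI⟩
        rw [if_neg hpI, if_pos hpI']
        by_cases hpA : p ∈ A
        · rw [if_pos (Set.mem_union_right I hpA),
            if_neg (show p ∉ I ∪ B from fun h => h.elim hpI (fun h' => h'.2 hpA))]
          ring
        · rw [if_neg (show p ∉ I ∪ A from fun h => h.elim hpI hpA),
            if_pos (Set.mem_union_right I (show p ∈ B from ⟨hpS, hpA⟩))]
      · rw [if_neg (show p ∉ I ∪ A from fun h => h.elim hpI (fun h' => hpI' (hASub h').1)),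
          if_neg (show p ∉ I ∪ B from fun h => h.elim hpI (fun h' => hpI' h'.1.1)),
          if_neg hpI, if_neg hpI']
  -- the midpoint is in the segment and in the open segment of the two new vertices
  have hmid_seg : (2⁻¹ : ℝ) • rho I + (2⁻¹ : ℝ) • rho I' ∈ segment ℝ (rho I) (rho I') :=
    ⟨2⁻¹, 2⁻¹, by norm_num, by norm_num, by norm_num, rfl⟩
  have hmid_open : (2⁻¹ : ℝ) • rho I + (2⁻¹ : ℝ) • rho I' ∈
      openSegment ℝ (rho (I ∪ A)) (rho (I ∪ B)) := by
    refine ⟨2⁻¹, 2⁻¹, by norm_num, by norm_num, by norm_num, ?_⟩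
    funext p
    simp only [Pi.add_apply, Pi.smul_apply, smul_eq_mul]
    have := hmidsum p
    linarith
  have hAin := (hext.2 hA_mem hB_mem hmid_seg hmid_open)
  rw [segment_eq_image] at hAin
  obtain ⟨t, _, hteq⟩ := hAin
  have h1 := congrFun hteq u.1
  have h2 := congrFun hteq v.1
  simp only [Pi.add_apply, Pi.smul_apply, smul_eq_mul] at h1 h2
  rw [rho_apply, rho_apply, rho_apply, if_neg u.2.2, if_pos u.2.1,
    if_pos (Set.mem_union_right I huA)] at h1
  rw [rho_apply, rho_apply, rho_apply, if_neg v.2.2, if_pos v.2.1,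
    if_neg (show v.1 ∉ I ∪ A from fun h => h.elim v.2.2 (fun h' => hvB.2 h'))] at h2
  linarith

theorem edge_iff_connected (I I' : Set α) (hI : IsPosetIdeal I) (hI' : IsPosetIdeal I')
    (hsub : I ⊆ I') :
    IsEdgeOf (orderPolytope α) (rho I) (rho I') ↔ ConnectedIn (I' \ I) := by
  constructor
  · rintro ⟨hne, hext⟩
    have hSne : (I' \ I).Nonempty := by
      by_contra h
      apply hne
      have hII' : I' = I := by
        apply Set.Subset.antisymm _ hsub
        intro p hp
        by_contra hpI
        exact h ⟨p, hp, hpI⟩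
      rw [hII']
    obtain ⟨p0, hp0⟩ := hSne
    haveI hne' : Nonempty ↥(I' \ I) := ⟨⟨p0, hp0⟩⟩
    refine SimpleGraph.Connected.mk fun u v => ?_
    by_contra huv
    exact disconnected_aux hI hI' hsub hext u v huv
  · intro hc
    constructor
    · obtain ⟨p0⟩ := hc.nonempty
      intro h
      have := congrFun h p0.1
      rw [rho_apply, rho_apply, if_neg p0.2.2, if_pos p0.2.1] at this
      norm_num at this
    · exact extreme_of_connected hI hI' hsub hc
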